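/- arXiv:2505.08682 — 3 statements merged into one kernel-verified Lean document; each statement's English description precedes it below -/
import Mathlib

section
/- Feasibility of the rigid resource-allocation problem (P_rig): there exist K_dl ∈ (0, K − a·θ], and for every user s ∈ {1,…,S} numbers K_{s,ul} > 0, p_s ∈ (0, P_max], τ_s ∈ [τ_{s,min}, ∞) satisfying (i) ∑_{s=1}^S K_{s,ul} ≤ K − a·θ, (ii) min_{s} ( D / (K_dl·B·log(1 + P_d·γ_s)) + τ_s ) ≥ max_{s} D / (K_dl·B·log(1 + P_d·γ_s)), and (iii) for every s, κ·α_s³/τ_s² + p_s·D / ( K_{s,ul}·B·log(1 + p_s·γ_s/K_{s,ul}) ) ≤ E_s, IF AND ONLY IF K > a·θ and for every s ∈ {1,…,S}, D/(B·γ_s) < E_s. -/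
open Real Finset


private lemma aux_div_eq (D B g pp u : ℝ) (hB : B ≠ 0) (hg : g ≠ 0) (hp : pp ≠ 0)
    (hu : 1 + u ≠ 0) :
    pp * D / (B * (pp * g) / (1 + u)) = D / (B * g) * (1 + u) := by
  field_simp

set_option maxHeartbeats 1600000 in
/-- Feasibility condition for the rigid resource-allocation problem `(P_rig)`:
the problem is feasible iff `K > a·θ` and `D/(B·γ_s) < E_s` for every user `s`. -/
theorem rigid_feasibility
    (S : ℕ) (hS : 1 ≤ S)
    (D B Pd Pmax κ K a θ : ℝ)
    (γ E α τmin : Fin S → ℝ)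
    (hD : 0 < D) (hB : 0 < B) (hPd : 0 < Pd) (hPmax : 0 < Pmax)
    (hκ : 0 < κ) (hK : 0 < K) (ha : 0 < a) (hθ : 0 < θ)
    (hγ : ∀ s, 0 < γ s) (hE : ∀ s, 0 < E s)
    (hα : ∀ s, 0 < α s) (hτmin : ∀ s, 0 < τmin s) :
    (∃ (Kdl : ℝ) (Kul p τ : Fin S → ℝ),
      0 < Kdl ∧ Kdl ≤ K - a * θ ∧
      (∀ s, 0 < Kul s) ∧
      (∀ s, 0 < p s ∧ p s ≤ Pmax) ∧
      (∀ s, τmin s ≤ τ s) ∧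
      -- (i) uplink resource-block sharing
      (∑ s, Kul s) ≤ K - a * θ ∧
      -- (ii) downlink/uplink separation: min ≥ max
      (∀ s s' : Fin S,
        D / (Kdl * B * Real.log (1 + Pd * γ s)) + τ s ≥
          D / (Kdl * B * Real.log (1 + Pd * γ s'))) ∧
      -- (iii) energy budget
      (∀ s, κ * (α s) ^ 3 / (τ s) ^ 2 +
          p s * D / (Kul s * B * Real.log (1 + p s * γ s / Kul s)) ≤ E s))
    ↔ (K > a * θ ∧ ∀ s, D / (B * γ s) < E s) := by
  constructor
  · rintro ⟨Kdl, Kul, p, τ, hKdl, hKdlle, hKul, hp, hτ, -, -, hen⟩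
    refine ⟨by linarith, fun s => ?_⟩
    have hγs := hγ s
    have hps := (hp s).1
    have hKuls := hKul s
    have hτs : 0 < τ s := lt_of_lt_of_le (hτmin s) (hτ s)
    have hu : 0 < p s * γ s / Kul s := by positivity
    have hlogpos : 0 < Real.log (1 + p s * γ s / Kul s) := Real.log_pos (by linarith)
    have hloglt : Real.log (1 + p s * γ s / Kul s) < p s * γ s / Kul s := by
      have h := Real.log_lt_sub_one_of_pos
        (show (0:ℝ) < 1 + p s * γ s / Kul s by linarith) (by nlinarith)
      linarith
    have hden : Kul s * B * Real.log (1 + p s * γ s / Kul s) < p s * (B * γ s) := by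
      have h1 : Kul s * B * Real.log (1 + p s * γ s / Kul s)
          < Kul s * B * (p s * γ s / Kul s) :=
        mul_lt_mul_of_pos_left hloglt (by positivity)
      have h2 : Kul s * B * (p s * γ s / Kul s) = p s * (B * γ s) := by
        field_simp
      linarith
    have hdenpos : 0 < Kul s * B * Real.log (1 + p s * γ s / Kul s) := by positivity
    have hlt : p s * D / (p s * (B * γ s))
        < p s * D / (Kul s * B * Real.log (1 + p s * γ s / Kul s)) :=
      div_lt_div_of_pos_left (by positivity) hdenpos hden
    have heq : p s * D / (p s * (B * γ s)) = D / (B * γ s) := by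
      rw [mul_div_mul_left _ _ (ne_of_gt hps)]
    rw [heq] at hlt
    have hcomp : 0 < κ * (α s) ^ 3 / (τ s) ^ 2 := by
      have := hα s; positivity
    have := hen s
    linarith
  · rintro ⟨hKθ, hEs⟩
    have hSpos : 0 < (S : ℝ) := by exact_mod_cast hS
    have hne : (Finset.univ : Finset (Fin S)).Nonempty :=
      Finset.univ_nonempty_iff.mpr (Fin.pos_iff_nonempty.mp hS)
    set Kdl : ℝ := K - a * θ with hKdldef
    have hKdl : 0 < Kdl := by simp only [hKdldef]; linarith
    set c : ℝ := Kdl / S with hcdef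
    have hc : 0 < c := by positivity
    set L : Fin S → ℝ := fun s => D / (B * γ s) with hLdef
    have hL : ∀ s, 0 < L s := fun s => div_pos hD (by have := hγ s; positivity)
    set ε : Fin S → ℝ := fun s => (E s - L s) / 2 with hεdef
    have hε : ∀ s, 0 < ε s := fun s => by
      have := hEs s; simp only [hεdef, hLdef]; linarith
    set g : Fin S → ℝ := fun s => D / (Kdl * B * Real.log (1 + Pd * γ s)) with hgdef
    have hgpos : ∀ s, 0 < g s := fun s => by
      have hlog : 0 < Real.log (1 + Pd * γ s) := Real.log_pos (by nlinarith [hγ s])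
      exact div_pos hD (by positivity)
    set T : ℝ := Finset.univ.sup' hne g with hTdef
    set p : Fin S → ℝ := fun s => min Pmax (c * ε s / (L s * γ s)) with hpdef
    have hppos : ∀ s, 0 < p s := fun s => by
      have h1 : 0 < c * ε s / (L s * γ s) := by
        have := hε s; have := hL s; have := hγ s; positivity
      exact lt_min hPmax h1
    set τ : Fin S → ℝ := fun s => max (τmin s) (max T (Real.sqrt (κ * (α s) ^ 3 / ε s)))
      with hτdef
    have hτ1 : ∀ s, τmin s ≤ τ s := fun s => le_max_left _ _
    have hτ2 : ∀ s, T ≤ τ s := fun s => le_trans (le_max_left _ _) (le_max_right _ _)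
    have hτ3 : ∀ s, Real.sqrt (κ * (α s) ^ 3 / ε s) ≤ τ s :=
      fun s => le_trans (le_max_right _ _) (le_max_right _ _)
    have hp2 : ∀ s, p s ≤ Pmax := fun s => min_le_left _ _
    have hp3 : ∀ s, p s ≤ c * ε s / (L s * γ s) := fun s => min_le_right _ _
    have hT : ∀ s, g s ≤ T := fun s => Finset.le_sup' g (Finset.mem_univ s)
    clear_value Kdl c L ε g T p τ
    refine ⟨Kdl, fun _ => c, p, τ, hKdl, le_refl _, fun _ => hc,
      fun s => ⟨hppos s, hp2 s⟩, hτ1, ?_, ?_, ?_⟩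
    · -- sum of constants
      rw [Finset.sum_const, Finset.card_univ, Fintype.card_fin, nsmul_eq_mul, hcdef]
      rw [mul_div_cancel₀ _ (ne_of_gt hSpos)]
    · -- condition (ii)
      intro s s'
      have h1 : g s' ≤ T := hT s'
      have h2 : T ≤ τ s := hτ2 s
      have h3 : 0 < g s := hgpos s
      simp only [hgdef] at h1 h3
      linarith
    · -- energy
      intro s
      have hγs := hγ s
      have hεs := hε s
      have hLs := hL s
      have hαs := hα s
      have hps := hppos s
      -- computation energy bound
      have hr : 0 < Real.sqrt (κ * (α s) ^ 3 / ε s) :=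
        Real.sqrt_pos.mpr (by positivity)
      have hτge : Real.sqrt (κ * (α s) ^ 3 / ε s) ≤ τ s := hτ3 s
      have hτpos : 0 < τ s := lt_of_lt_of_le hr hτge
      have hτsq : κ * (α s) ^ 3 / ε s ≤ (τ s) ^ 2 := by
        have := Real.sq_sqrt (le_of_lt (show (0:ℝ) < κ * (α s) ^ 3 / ε s by positivity))
        nlinarith [Real.sqrt_nonneg (κ * (α s) ^ 3 / ε s)]
      have hcompbound : κ * (α s) ^ 3 / (τ s) ^ 2 ≤ ε s := by
        rw [div_le_iff₀ (by positivity)]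
        rw [div_le_iff₀ hεs] at hτsq
        nlinarith
      -- communication energy bound
      have hu : 0 < p s * γ s / c := by positivity
      have hlog_lb : (p s * γ s / c) / (1 + p s * γ s / c)
          ≤ Real.log (1 + p s * γ s / c) := by
        have h := Real.one_sub_inv_le_log_of_pos (show (0:ℝ) < 1 + p s * γ s / c by linarith)
        have heq : 1 - (1 + p s * γ s / c)⁻¹ = (p s * γ s / c) / (1 + p s * γ s / c) := by
          field_simp
          ring
        linarith [heq ▸ h]
      have hlogpos : 0 < Real.log (1 + p s * γ s / c) := Real.log_pos (by linarith)
      have hdenpos : 0 < c * B * Real.log (1 + p s * γ s / c) := by positivity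
      have hden_lb : B * (p s * γ s) / (1 + p s * γ s / c)
          ≤ c * B * Real.log (1 + p s * γ s / c) := by
        have h1 : c * B * ((p s * γ s / c) / (1 + p s * γ s / c))
            ≤ c * B * Real.log (1 + p s * γ s / c) :=
          mul_le_mul_of_nonneg_left hlog_lb (by positivity)
        have h2 : c * B * ((p s * γ s / c) / (1 + p s * γ s / c))
            = B * (p s * γ s) / (1 + p s * γ s / c) := by
          field_simp
        linarith
      have hcomm : p s * D / (c * B * Real.log (1 + p s * γ s / c))
          ≤ L s * (1 + p s * γ s / c) := by
        have hlbpos : 0 < B * (p s * γ s) / (1 + p s * γ s / c) := by positivity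
        have hmono : p s * D / (c * B * Real.log (1 + p s * γ s / c))
            ≤ p s * D / (B * (p s * γ s) / (1 + p s * γ s / c)) :=
          div_le_div_of_nonneg_left (by positivity) hlbpos hden_lb
        have heq2 : p s * D / (B * (p s * γ s) / (1 + p s * γ s / c))
            = L s * (1 + p s * γ s / c) := by
          simp only [hLdef]
          exact aux_div_eq D B (γ s) (p s) (p s * γ s / c)
            (ne_of_gt hB) (ne_of_gt hγs) (ne_of_gt hps) (by positivity)
        linarith [heq2 ▸ hmono]
      have hpbound : p s ≤ c * ε s / (L s * γ s) := hp3 s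
      have hLu : L s * (p s * γ s / c) ≤ ε s := by
        have h1 : L s * (p s * γ s / c) ≤ L s * ((c * ε s / (L s * γ s)) * γ s / c) := by
          apply mul_le_mul_of_nonneg_left _ (le_of_lt hLs)
          apply div_le_div_of_nonneg_right _ hc.le
          exact mul_le_mul_of_nonneg_right hpbound (le_of_lt hγs)
        have h2 : L s * ((c * ε s / (L s * γ s)) * γ s / c) = ε s := by
          field_simp
        linarith
      have hfinal : L s * (1 + p s * γ s / c) ≤ L s + ε s := by
        have : L s * (1 + p s * γ s / c) = L s + L s * (p s * γ s / c) := by ring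
        linarith
      have hE2 : L s + 2 * ε s = E s := by
        simp only [hεdef]; ring
      calc κ * (α s) ^ 3 / (τ s) ^ 2 + p s * D / (c * B * Real.log (1 + p s * γ s / c))
          ≤ ε s + (L s + ε s) := by linarith
        _ = E s := by linarith
end

section
/- Feasibility of the session-based problem (P_σ): there exist nonnegative reals t^dl_1,…,t^dl_S, t^ul_1,…,t^ul_S, T_idle, K^dl_1,…,K^dl_S, K^dl_{HB,1},…,K^dl_{HB,S}, K^ul_{HB,1},…,K^ul_{HB,S}, and for all 1 ≤ s ≤ ℓ ≤ S reals K^ul_{s,ℓ} ≥ 0 and p^ul_{s,ℓ} ∈ [0, P_max], satisfying all constraints (16), (18), (19), (20), (21), (22), (24') of the session-based problem listed in the context, IF AND ONLY IF K > a·θ and for every s ∈ {1,…,S}, D < E_s·B·γ_s. -/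
open Real Finset

set_option maxHeartbeats 2000000

private lemma log_lb' {x : ℝ} (hx : 0 ≤ x) : x / (1 + x) ≤ Real.log (1 + x) := by
  have h1 : (0:ℝ) < 1 + x := by linarith
  have h2 : Real.log ((1+x)⁻¹) ≤ (1+x)⁻¹ - 1 := Real.log_le_sub_one_of_pos (by positivity)
  rw [Real.log_inv] at h2
  have h3 : (1+x)⁻¹ - 1 = -(x/(1+x)) := by field_simp; ring
  rw [h3] at h2; linarith

private lemma log_ub' {x : ℝ} (hx : 0 ≤ x) : Real.log (1 + x) ≤ x := by
  have := Real.log_le_sub_one_of_pos (show (0:ℝ) < 1 + x by linarith)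
  linarith

/-- Feasibility condition for the session-based problem `(P_σ)`:
the problem is feasible iff `K > a·θ` and `D < E_s·B·γ_s` for every user `s`.
Indices are 0-based: rank `j : Fin S` corresponds to the `(j+1)`-th uplink
session of the paper, and `σ j` is the user starting its uplink at session `j`. -/
theorem session_feasibility
    (S : ℕ) (hS : 1 ≤ S) (σ : Equiv.Perm (Fin S))
    (D B Pd Pmax κ K a θ : ℝ)
    (γ E α τmin : Fin S → ℝ)
    (hD : 0 < D) (hB : 0 < B) (hPd : 0 < Pd) (hPmax : 0 < Pmax)
    (hκ : 0 < κ) (hK : 0 < K) (ha : 0 < a) (hθ : 0 < θ)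
    (hγ : ∀ s, 0 < γ s) (hE : ∀ s, 0 < E s)
    (hα : ∀ s, 0 < α s) (hτmin : ∀ s, 0 < τmin s) :
    (∃ (tdl tul : Fin S → ℝ) (Tidle : ℝ)
       (Kdl KdlHB KulHB : Fin S → ℝ)
       (Kul pul : Fin S → Fin S → ℝ),
      -- nonnegativity of all variables
      (∀ ℓ', 0 ≤ tdl ℓ') ∧ (∀ ℓ, 0 ≤ tul ℓ) ∧ 0 ≤ Tidle ∧
      (∀ ℓ', 0 ≤ Kdl ℓ') ∧ (∀ ℓ', 0 ≤ KdlHB ℓ') ∧ (∀ ℓ, 0 ≤ KulHB ℓ) ∧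
      (∀ j ℓ : Fin S, j ≤ ℓ →
        0 ≤ Kul (σ j) ℓ ∧ 0 ≤ pul (σ j) ℓ ∧ pul (σ j) ℓ ≤ Pmax) ∧
      -- (16) computation-time lower bound
      (∀ j : Fin S,
        (∑ ℓ ∈ Finset.Iio j, tul ℓ) + (∑ ℓ' ∈ Finset.Ioi (σ j), tdl ℓ') + Tidle
          ≥ τmin (σ j)) ∧
      -- (18) downlink completion
      (∀ m : Fin S,
        (∑ i ∈ Finset.Iic m, Kdl i * B * Real.log (1 + Pd * γ m) * tdl i) ≥ D) ∧
      -- (19) downlink resource-block sharing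
      (∀ m : Fin S, Kdl m + KdlHB m ≤ K) ∧
      -- (20) uplink completion
      (∀ j : Fin S,
        (∑ ℓ ∈ Finset.Ici j,
          (Kul (σ j) ℓ * B *
            Real.log (1 + pul (σ j) ℓ * γ (σ j) / Kul (σ j) ℓ)) * tul ℓ) ≥ D) ∧
      -- (21) uplink resource-block sharing
      (∀ ℓ : Fin S,
        (∑ j ∈ Finset.Iic ℓ, Kul (σ j) ℓ) + KulHB ℓ ≤ K) ∧
      -- (22) energy budget
      (∀ j : Fin S,
        (∑ ℓ ∈ Finset.Ici j, pul (σ j) ℓ * tul ℓ) +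
          κ * (α (σ j)) ^ 3 /
            ((∑ ℓ ∈ Finset.Iio j, tul ℓ) +
              (∑ ℓ' ∈ Finset.Ioi (σ j), tdl ℓ') + Tidle) ^ 2
          ≤ E (σ j)) ∧
      -- (24') high-bandwidth traffic requirement
      ((∑ ℓ', KdlHB ℓ' * tdl ℓ') + (∑ ℓ, KulHB ℓ * tul ℓ) + K * Tidle ≥
        a * θ * ((∑ ℓ', tdl ℓ') + Tidle + (∑ ℓ, tul ℓ))))
    ↔ (K > a * θ ∧ ∀ s, D < E s * B * γ s) := by
  constructor
  · rintro ⟨tdl, tul, Tidle, Kdl, KdlHB, KulHB, Kul, pul,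
      hdl0, hul0, hTi0, hKdl0, hKdlHB0, hKulHB0, hKp, h16, h18, h19, h20, h21, h22, h24⟩
    have hτ : ∀ j : Fin S,
        0 < (∑ ℓ ∈ Finset.Iio j, tul ℓ) + (∑ ℓ' ∈ Finset.Ioi (σ j), tdl ℓ') + Tidle :=
      fun j => lt_of_lt_of_le (hτmin (σ j)) (h16 j)
    constructor
    · -- K > a*θ
      have z0 : Fin S := ⟨0, hS⟩
      -- find a session with positive uplink data
      have hpos : ∀ ℓ ∈ Finset.Ici z0,
          (0:ℝ) ≤ (Kul (σ z0) ℓ * B *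
              Real.log (1 + pul (σ z0) ℓ * γ (σ z0) / Kul (σ z0) ℓ)) * tul ℓ := by
        intro ℓ hℓ
        obtain ⟨hK0, hp0, _⟩ := hKp z0 ℓ (Finset.mem_Ici.mp hℓ)
        have hlog : 0 ≤ Real.log (1 + pul (σ z0) ℓ * γ (σ z0) / Kul (σ z0) ℓ) := by
          apply Real.log_nonneg
          have : 0 ≤ pul (σ z0) ℓ * γ (σ z0) / Kul (σ z0) ℓ :=
            div_nonneg (mul_nonneg hp0 (hγ _).le) hK0
          linarith
        have := hul0 ℓ
        positivity
      have hexists : ∃ ℓ ∈ Finset.Ici z0,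
          (0:ℝ) < (Kul (σ z0) ℓ * B *
              Real.log (1 + pul (σ z0) ℓ * γ (σ z0) / Kul (σ z0) ℓ)) * tul ℓ := by
        by_contra hcon
        push_neg at hcon
        have : (∑ ℓ ∈ Finset.Ici z0,
            (Kul (σ z0) ℓ * B *
              Real.log (1 + pul (σ z0) ℓ * γ (σ z0) / Kul (σ z0) ℓ)) * tul ℓ) ≤ 0 := by
          apply Finset.sum_nonpos
          intro ℓ hℓ; exact hcon ℓ hℓ
        linarith [h20 z0]
      obtain ⟨ℓ₀, hℓ₀mem, hℓ₀⟩ := hexists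
      have htul₀ : 0 < tul ℓ₀ := by
        rcases lt_or_eq_of_le (hul0 ℓ₀) with h | h
        · exact h
        · exfalso; rw [← h] at hℓ₀; simp at hℓ₀
      have hKul₀ : 0 < Kul (σ z0) ℓ₀ := by
        rcases lt_or_eq_of_le (hKp z0 ℓ₀ (Finset.mem_Ici.mp hℓ₀mem)).1 with h | h
        · exact h
        · exfalso; rw [← h] at hℓ₀; simp at hℓ₀
      -- KulHB ℓ₀ < K
      have hHB₀ : KulHB ℓ₀ < K := by
        have hsum : Kul (σ z0) ℓ₀ ≤ ∑ j ∈ Finset.Iic ℓ₀, Kul (σ j) ℓ₀ := by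
          apply Finset.single_le_sum (f := fun j => Kul (σ j) ℓ₀)
          · intro j hj; exact (hKp j ℓ₀ (Finset.mem_Iic.mp hj)).1
          · exact Finset.mem_Iic.mpr (Finset.mem_Ici.mp hℓ₀mem)
        have := h21 ℓ₀
        linarith
      -- total time positive
      have hT : 0 < (∑ ℓ', tdl ℓ') + Tidle + (∑ ℓ, tul ℓ) := by
        have h1 : (∑ ℓ ∈ Finset.Iio z0, tul ℓ) ≤ ∑ ℓ, tul ℓ :=
          Finset.sum_le_sum_of_subset_of_nonneg (Finset.subset_univ _)
            (fun i _ _ => hul0 i)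
        have h2 : (∑ ℓ' ∈ Finset.Ioi (σ z0), tdl ℓ') ≤ ∑ ℓ', tdl ℓ' :=
          Finset.sum_le_sum_of_subset_of_nonneg (Finset.subset_univ _)
            (fun i _ _ => hdl0 i)
        have := hτ z0
        linarith
      -- strict bound on (24') LHS
      have hdlle : (∑ ℓ', KdlHB ℓ' * tdl ℓ') ≤ ∑ ℓ', K * tdl ℓ' := by
        apply Finset.sum_le_sum
        intro i _
        have := h19 i; have := hKdl0 i
        exact mul_le_mul_of_nonneg_right (by linarith) (hdl0 i)
      have hulg : (∑ ℓ, KulHB ℓ * tul ℓ) < ∑ ℓ, K * tul ℓ := by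
        apply Finset.sum_lt_sum
        · intro i _
          have h1 : Kul (σ i) i ≥ 0 := (hKp i i le_rfl).1
          have hs : Kul (σ i) i ≤ ∑ j ∈ Finset.Iic i, Kul (σ j) i := by
            apply Finset.single_le_sum (f := fun j => Kul (σ j) i)
            · intro j hj; exact (hKp j i (Finset.mem_Iic.mp hj)).1
            · exact Finset.mem_Iic.mpr le_rfl
          have := h21 i
          exact mul_le_mul_of_nonneg_right (by linarith) (hul0 i)
        · exact ⟨ℓ₀, Finset.mem_univ _, mul_lt_mul_of_pos_right hHB₀ htul₀⟩
      have hKT : a * θ * ((∑ ℓ', tdl ℓ') + Tidle + (∑ ℓ, tul ℓ)) <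
          K * ((∑ ℓ', tdl ℓ') + Tidle + (∑ ℓ, tul ℓ)) := by
        have : (∑ ℓ', K * tdl ℓ') + (∑ ℓ, K * tul ℓ) + K * Tidle =
            K * ((∑ ℓ', tdl ℓ') + Tidle + (∑ ℓ, tul ℓ)) := by
          rw [← Finset.mul_sum, ← Finset.mul_sum]; ring
        linarith
      exact lt_of_mul_lt_mul_right hKT hT.le
    · intro u
      set j := σ.symm u with hj
      have hju : σ j = u := σ.apply_symm_apply u
      have hbound : ∀ ℓ ∈ Finset.Ici j,
          (Kul (σ j) ℓ * B *
              Real.log (1 + pul (σ j) ℓ * γ (σ j) / Kul (σ j) ℓ)) * tul ℓ ≤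
            B * γ (σ j) * (pul (σ j) ℓ * tul ℓ) := by
        intro ℓ hℓ
        obtain ⟨hK0, hp0, _⟩ := hKp j ℓ (Finset.mem_Ici.mp hℓ)
        rcases lt_or_eq_of_le hK0 with h | h
        · have hx : 0 ≤ pul (σ j) ℓ * γ (σ j) / Kul (σ j) ℓ :=
            div_nonneg (mul_nonneg hp0 (hγ _).le) hK0
          have hlog := log_ub' hx
          have h1 : Kul (σ j) ℓ * B *
              Real.log (1 + pul (σ j) ℓ * γ (σ j) / Kul (σ j) ℓ) ≤
              Kul (σ j) ℓ * B * (pul (σ j) ℓ * γ (σ j) / Kul (σ j) ℓ) := by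
            apply mul_le_mul_of_nonneg_left hlog (by positivity)
          have h2 : Kul (σ j) ℓ * B * (pul (σ j) ℓ * γ (σ j) / Kul (σ j) ℓ) =
              B * γ (σ j) * pul (σ j) ℓ := by
            field_simp
          rw [h2] at h1
          calc (Kul (σ j) ℓ * B *
              Real.log (1 + pul (σ j) ℓ * γ (σ j) / Kul (σ j) ℓ)) * tul ℓ
              ≤ (B * γ (σ j) * pul (σ j) ℓ) * tul ℓ :=
                mul_le_mul_of_nonneg_right h1 (hul0 ℓ)
            _ = B * γ (σ j) * (pul (σ j) ℓ * tul ℓ) := by ring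
        · rw [← h]
          have : 0 ≤ pul (σ j) ℓ * tul ℓ := mul_nonneg hp0 (hul0 ℓ)
          have := hγ (σ j)
          simp only [zero_mul]
          exact mul_nonneg (mul_nonneg hB.le (hγ _).le) ‹0 ≤ pul (σ j) ℓ * tul ℓ›
      have hsum : D ≤ B * γ (σ j) * ∑ ℓ ∈ Finset.Ici j, pul (σ j) ℓ * tul ℓ := by
        calc D ≤ ∑ ℓ ∈ Finset.Ici j,
            (Kul (σ j) ℓ * B *
              Real.log (1 + pul (σ j) ℓ * γ (σ j) / Kul (σ j) ℓ)) * tul ℓ := h20 j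
          _ ≤ ∑ ℓ ∈ Finset.Ici j, B * γ (σ j) * (pul (σ j) ℓ * tul ℓ) :=
              Finset.sum_le_sum hbound
          _ = B * γ (σ j) * ∑ ℓ ∈ Finset.Ici j, pul (σ j) ℓ * tul ℓ := by
              rw [Finset.mul_sum]
      have hen : (∑ ℓ ∈ Finset.Ici j, pul (σ j) ℓ * tul ℓ) < E (σ j) := by
        have h1 := h22 j
        have h2 := hτ j
        have h3 : 0 < κ * (α (σ j)) ^ 3 /
            ((∑ ℓ ∈ Finset.Iio j, tul ℓ) +
              (∑ ℓ' ∈ Finset.Ioi (σ j), tdl ℓ') + Tidle) ^ 2 := by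
          have := hα (σ j); positivity
        linarith
      have hBγ : 0 < B * γ (σ j) := by have := hγ (σ j); positivity
      calc D ≤ B * γ (σ j) * ∑ ℓ ∈ Finset.Ici j, pul (σ j) ℓ * tul ℓ := hsum
        _ < B * γ (σ j) * E (σ j) := by
            exact mul_lt_mul_of_pos_left hen hBγ
        _ = E (σ j) * B * γ (σ j) := by ring
        _ = E u * B * γ u := by rw [hju]
  · rintro ⟨hKa, hDE⟩
    have hne : (Finset.univ : Finset (Fin S)).Nonempty := ⟨⟨0, hS⟩, Finset.mem_univ _⟩
    set c := K - a * θ with hc_def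
    have hc : 0 < c := by simp only [hc_def]; linarith
    -- energies
    set e : Fin S → ℝ := fun s => (D / (B * γ s) + E s) / 2 with he_def
    have hDb : ∀ s, D / (B * γ s) < E s := by
      intro s
      rw [div_lt_iff₀ (by have := hγ s; positivity)]
      nlinarith [hDE s, hγ s, hE s]
    have heD : ∀ s, D / (B * γ s) < e s := by
      intro s; simp only [he_def]; linarith [hDb s]
    have he0 : ∀ s, 0 < e s := by
      intro s
      have h1 : 0 < D / (B * γ s) := by have := hγ s; positivity
      simp only [he_def]; linarith [hE s]
    have heE : ∀ s, e s < E s := by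
      intro s; simp only [he_def]; linarith [hDb s]
    -- target spectral efficiency
    set q : Fin S → ℝ := fun s => D / (B * e s) with hq_def
    have hq0 : ∀ s, 0 < q s := by
      intro s; have := he0 s; simp only [hq_def]; positivity
    have hqγ : ∀ s, q s < γ s := by
      intro s
      have h1 : 0 < B * e s := by have := he0 s; positivity
      simp only [hq_def]
      rw [div_lt_iff₀ h1]
      have h2 := heD s
      rw [div_lt_iff₀ (by have := hγ s; positivity)] at h2
      nlinarith
    have hqD : ∀ s, q s * (B * e s) = D := by
      intro s; have := he0 s
      simp only [hq_def]; field_simp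
    -- powers
    set p : Fin S → ℝ := fun s => min Pmax (c * (γ s - q s) / (q s * γ s)) with hp_def
    have hp0 : ∀ s, 0 < p s := by
      intro s
      have h1 : 0 < c * (γ s - q s) / (q s * γ s) := by
        have := hqγ s; have := hq0 s; have := hγ s
        have h2 : 0 < γ s - q s := by linarith
        positivity
      exact lt_min hPmax h1
    have hpP : ∀ s, p s ≤ Pmax := fun s => min_le_left _ _
    have hpb : ∀ s, p s * (q s * γ s) ≤ c * (γ s - q s) := by
      intro s
      have h1 : 0 < q s * γ s := mul_pos (hq0 s) (hγ s)
      have h2 : p s ≤ c * (γ s - q s) / (q s * γ s) := min_le_right _ _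
      rw [le_div_iff₀ h1] at h2
      exact h2
    -- key uplink-rate inequality
    have h20core : ∀ s, D ≤ (c * B * Real.log (1 + p s * γ s / c)) * (e s / p s) := by
      intro s
      have hps := hp0 s; have hγs := hγ s; have hqs := hq0 s; have hes := he0 s
      have hx : 0 ≤ p s * γ s / c := by positivity
      have hlog := log_lb' hx
      have hden : 0 < 1 + p s * γ s / c := by positivity
      -- x/(1+x) = p γ /(c + p γ)
      have hcp : 0 < c + p s * γ s := by positivity
      have hxx : p s * γ s / c / (1 + p s * γ s / c) = p s * γ s / (c + p s * γ s) := by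
        rw [div_eq_div_iff (by positivity) hcp.ne']
        field_simp
      rw [hxx] at hlog
      set L := Real.log (1 + p s * γ s / c) with hL_def
      have hlog2 : p s * γ s ≤ L * (c + p s * γ s) := (div_le_iff₀ hcp).mp hlog
      have h5 : q s * p s ≤ c * L := by
        nlinarith [mul_le_mul_of_nonneg_left hlog2 hc.le,
          mul_le_mul_of_nonneg_left (hpb s) hps.le, hcp, mul_pos hqs hps]
      have h6 : c * B * L * (e s / p s) = c * B * L * e s / p s := by ring
      rw [h6, le_div_iff₀ hps]
      have h7 := hqD s
      nlinarith [mul_nonneg (mul_pos hB hes).le (sub_nonneg.mpr h5)]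
    -- idle time
    set Ti : ℝ := Finset.univ.sup' hne
        (fun s => max (τmin s) (Real.sqrt (κ * α s ^ 3 / (E s - e s)))) with hTi_def
    have hTige : ∀ s, τmin s ≤ Ti := fun s =>
      le_trans (le_max_left _ _)
        (Finset.le_sup' (fun s => max (τmin s) (Real.sqrt (κ * α s ^ 3 / (E s - e s))))
          (Finset.mem_univ s))
    have hTi0 : 0 < Ti := lt_of_lt_of_le (hτmin ⟨0,hS⟩) (hTige _)
    have hTisq : ∀ s, κ * α s ^ 3 / (E s - e s) ≤ Ti ^ 2 := by
      intro s
      have hEe : 0 < E s - e s := by linarith [heE s]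
      have hX : 0 ≤ κ * α s ^ 3 / (E s - e s) := by have := hα s; positivity
      have h1 : Real.sqrt (κ * α s ^ 3 / (E s - e s)) ≤ Ti :=
        le_trans (le_max_right _ _)
          (Finset.le_sup' (fun s => max (τmin s) (Real.sqrt (κ * α s ^ 3 / (E s - e s))))
            (Finset.mem_univ s))
      calc κ * α s ^ 3 / (E s - e s) = Real.sqrt (κ * α s ^ 3 / (E s - e s)) ^ 2 :=
          (Real.sq_sqrt hX).symm
        _ ≤ Ti ^ 2 := pow_le_pow_left₀ (Real.sqrt_nonneg _) h1 2
    -- downlink time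
    have hlogdl : ∀ m, 0 < Real.log (1 + Pd * γ m) := by
      intro m
      apply Real.log_pos
      have := hγ m; nlinarith
    set td : ℝ := Finset.univ.sup' hne (fun m => D / (c * B * Real.log (1 + Pd * γ m)))
      with htd_def
    have htdge : ∀ m, D / (c * B * Real.log (1 + Pd * γ m)) ≤ td := fun m =>
      Finset.le_sup' (fun m => D / (c * B * Real.log (1 + Pd * γ m))) (Finset.mem_univ m)
    have htd0 : 0 < td := by
      refine lt_of_lt_of_le ?_ (htdge ⟨0,hS⟩)
      have := hlogdl ⟨0,hS⟩; positivity
    have htdD : ∀ m, D ≤ c * B * Real.log (1 + Pd * γ m) * td := by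
      intro m
      have h1 := htdge m
      have h2 : 0 < c * B * Real.log (1 + Pd * γ m) := by have := hlogdl m; positivity
      rw [div_le_iff₀ h2] at h1
      linarith [h1]
    refine ⟨fun _ => td, fun ℓ => e (σ ℓ) / p (σ ℓ), Ti, fun _ => c, fun _ => a*θ,
      fun _ => a*θ, fun u ℓ => if u = σ ℓ then c else 0,
      fun u ℓ => if u = σ ℓ then p u else 0,
      fun _ => htd0.le,
      fun ℓ => div_nonneg (he0 _).le (hp0 _).le,
      hTi0.le, fun _ => hc.le,
      fun _ => by positivity, fun _ => by positivity,
      ?_, ?_, ?_, ?_, ?_, ?_, ?_, ?_⟩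
    · -- variable bounds for Kul, pul
      intro j ℓ _
      refine ⟨?_, ?_, ?_⟩ <;> simp only [] <;> split_ifs
      · exact hc.le
      · exact le_rfl
      · exact (hp0 _).le
      · exact le_rfl
      · exact hpP _
      · exact hPmax.le
    · -- (16)
      intro j
      have h1 : 0 ≤ ∑ ℓ ∈ Finset.Iio j, e (σ ℓ) / p (σ ℓ) :=
        Finset.sum_nonneg fun ℓ _ => div_nonneg (he0 _).le (hp0 _).le
      have h2 : (0:ℝ) ≤ ∑ _ℓ' ∈ Finset.Ioi (σ j), td :=
        Finset.sum_nonneg fun _ _ => htd0.le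
      have := hTige (σ j)
      simp only [ge_iff_le]
      linarith
    · -- (18)
      intro m
      rw [Finset.sum_const, nsmul_eq_mul]
      have h1 : (1:ℝ) ≤ ((Finset.Iic m).card : ℝ) := by
        have : 0 < (Finset.Iic m).card :=
          Finset.card_pos.mpr ⟨m, Finset.mem_Iic.mpr le_rfl⟩
        exact_mod_cast this
      have h2 := htdD m
      nlinarith [h2, h1, hD]
    · -- (19)
      intro m; simp only []; linarith
    · -- (20)
      intro j
      have hr : ∀ ℓ ∈ Finset.Ici j,
          ((if σ j = σ ℓ then c else 0) * B *
            Real.log (1 + (if σ j = σ ℓ then p (σ j) else 0) * γ (σ j) /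
              (if σ j = σ ℓ then c else 0))) * (e (σ ℓ) / p (σ ℓ)) =
          if ℓ = j then
            (c * B * Real.log (1 + p (σ j) * γ (σ j) / c)) * (e (σ j) / p (σ j))
          else 0 := by
        intro ℓ _
        by_cases h : ℓ = j
        · subst h; simp
        · have h2 : ¬ (σ j = σ ℓ) := fun hh => h (σ.injective hh).symm
          simp [h, h2]
      rw [Finset.sum_congr rfl hr,
        Finset.sum_ite_eq' (Finset.Ici j) j, if_pos (Finset.mem_Ici.mpr le_rfl)]
      exact h20core (σ j)
    · -- (21)
      intro ℓ
      have hr : ∀ j ∈ Finset.Iic ℓ,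
          (if σ j = σ ℓ then c else 0) = if j = ℓ then c else 0 := by
        intro j _
        by_cases h : j = ℓ
        · subst h; simp
        · simp [h, fun hh => h (σ.injective hh)]
      rw [Finset.sum_congr rfl hr,
        Finset.sum_ite_eq' (Finset.Iic ℓ) ℓ, if_pos (Finset.mem_Iic.mpr le_rfl)]
      show c + a * θ ≤ K
      linarith
    · -- (22)
      intro j
      have hr : ∀ ℓ ∈ Finset.Ici j,
          (if σ j = σ ℓ then p (σ j) else 0) * (e (σ ℓ) / p (σ ℓ)) =
          if ℓ = j then e (σ j) else 0 := by
        intro ℓ _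
        by_cases h : ℓ = j
        · subst h
          rw [if_pos rfl, if_pos rfl, ← mul_div_assoc,
            mul_div_cancel_left₀ _ (hp0 (σ ℓ)).ne']
        · have h2 : ¬ (σ j = σ ℓ) := fun hh => h (σ.injective hh).symm
          simp [h, h2]
      rw [Finset.sum_congr rfl hr,
        Finset.sum_ite_eq' (Finset.Ici j) j, if_pos (Finset.mem_Ici.mpr le_rfl)]
      set τc := (∑ ℓ ∈ Finset.Iio j, e (σ ℓ) / p (σ ℓ)) +
        (∑ _ℓ' ∈ Finset.Ioi (σ j), td) + Ti with hτc_def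
      have h1 : 0 ≤ ∑ ℓ ∈ Finset.Iio j, e (σ ℓ) / p (σ ℓ) :=
        Finset.sum_nonneg fun ℓ _ => div_nonneg (he0 _).le (hp0 _).le
      have h2 : (0:ℝ) ≤ ∑ _ℓ' ∈ Finset.Ioi (σ j), td :=
        Finset.sum_nonneg fun _ _ => htd0.le
      have hτcge : Ti ≤ τc := by simp only [hτc_def]; linarith
      have hτcp : 0 < τc := lt_of_lt_of_le hTi0 hτcge
      have hsq : Ti ^ 2 ≤ τc ^ 2 := pow_le_pow_left₀ hTi0.le hτcge 2
      have hEe : 0 < E (σ j) - e (σ j) := by linarith [heE (σ j)]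
      have hX := hTisq (σ j)
      rw [div_le_iff₀ hEe] at hX
      have h3 : κ * α (σ j) ^ 3 ≤ τc ^ 2 * (E (σ j) - e (σ j)) := by nlinarith
      have h4 : κ * α (σ j) ^ 3 / τc ^ 2 ≤ E (σ j) - e (σ j) := by
        rw [div_le_iff₀ (by positivity)]
        linarith
      linarith
    · -- (24')
      rw [← Finset.mul_sum, ← Finset.mul_sum]
      have hKT : a * θ * Ti ≤ K * Ti := mul_le_mul_of_nonneg_right hKa.le hTi0.le
      simp only [ge_iff_le]
      nlinarith [hKT]
end

section
/- Suppose (K_dl, (K_{s,ul})_s, (p_s)_s, (τ_s)_s) is a feasible point of the rigid problem (P_rig) with K' = K − a·θ > 0 that additionally satisfies the uplink ordering constraint for the permutation σ: for all 1 ≤ s < s' ≤ S, D/(K_dl·B·log(1 + P_d·γ_{σ(s)})) + τ_{σ(s)} ≤ D/(K_dl·B·log(1 + P_d·γ_{σ(s')})) + τ_{σ(s')}. Then the session-based problem (P_σ), whose constraints (16), (18), (19), (20), (21), (22), (24') are listed in the context, is feasible. -/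
open Real Finset

/-- A feasible point of the rigid problem `(P_rig)` with resource budget `K'`. -/
def RigidFeasible (S : ℕ) (D B Pd Pmax κ K' : ℝ)
    (γ E α τmin : Fin S → ℝ)
    (Kdl : ℝ) (Kul p τ : Fin S → ℝ) : Prop :=
  0 < Kdl ∧ Kdl ≤ K' ∧
  (∀ s, 0 < Kul s) ∧
  (∀ s, 0 < p s ∧ p s ≤ Pmax) ∧
  (∀ s, τmin s ≤ τ s) ∧
  (∑ s, Kul s) ≤ K' ∧
  (∀ s s' : Fin S,
    D / (Kdl * B * Real.log (1 + Pd * γ s)) + τ s ≥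
      D / (Kdl * B * Real.log (1 + Pd * γ s'))) ∧
  (∀ s, κ * (α s) ^ 3 / (τ s) ^ 2 +
      p s * D / (Kul s * B * Real.log (1 + p s * γ s / Kul s)) ≤ E s)

/-- Feasibility of the session-based problem `(P_σ)`: indices are 0-based,
rank `j : Fin S` corresponds to the `(j+1)`-th session of the paper, and
`σ j` is the user starting its uplink transmission at session `j`. -/
def SessionFeasible (S : ℕ) (σ : Equiv.Perm (Fin S))
    (D B Pd Pmax κ K a θ : ℝ)
    (γ E α τmin : Fin S → ℝ) : Prop :=
  ∃ (tdl tul : Fin S → ℝ) (Tidle : ℝ)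
    (Kdl KdlHB KulHB : Fin S → ℝ)
    (Kul pul : Fin S → Fin S → ℝ),
    (∀ ℓ', 0 ≤ tdl ℓ') ∧ (∀ ℓ, 0 ≤ tul ℓ) ∧ 0 ≤ Tidle ∧
    (∀ ℓ', 0 ≤ Kdl ℓ') ∧ (∀ ℓ', 0 ≤ KdlHB ℓ') ∧ (∀ ℓ, 0 ≤ KulHB ℓ) ∧
    (∀ j ℓ : Fin S, j ≤ ℓ →
      0 ≤ Kul (σ j) ℓ ∧ 0 ≤ pul (σ j) ℓ ∧ pul (σ j) ℓ ≤ Pmax) ∧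
    -- (16) computation-time lower bound
    (∀ j : Fin S,
      (∑ ℓ ∈ Finset.Iio j, tul ℓ) + (∑ ℓ' ∈ Finset.Ioi (σ j), tdl ℓ') + Tidle
        ≥ τmin (σ j)) ∧
    -- (18) downlink completion
    (∀ m : Fin S,
      (∑ i ∈ Finset.Iic m, Kdl i * B * Real.log (1 + Pd * γ m) * tdl i) ≥ D) ∧
    -- (19) downlink resource-block sharing
    (∀ m : Fin S, Kdl m + KdlHB m ≤ K) ∧
    -- (20) uplink completion
    (∀ j : Fin S,
      (∑ ℓ ∈ Finset.Ici j,
        (Kul (σ j) ℓ * B *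
          Real.log (1 + pul (σ j) ℓ * γ (σ j) / Kul (σ j) ℓ)) * tul ℓ) ≥ D) ∧
    -- (21) uplink resource-block sharing
    (∀ ℓ : Fin S,
      (∑ j ∈ Finset.Iic ℓ, Kul (σ j) ℓ) + KulHB ℓ ≤ K) ∧
    -- (22) energy budget
    (∀ j : Fin S,
      (∑ ℓ ∈ Finset.Ici j, pul (σ j) ℓ * tul ℓ) +
        κ * (α (σ j)) ^ 3 /
          ((∑ ℓ ∈ Finset.Iio j, tul ℓ) +
            (∑ ℓ' ∈ Finset.Ioi (σ j), tdl ℓ') + Tidle) ^ 2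
        ≤ E (σ j)) ∧
    -- (24') high-bandwidth traffic requirement
    ((∑ ℓ', KdlHB ℓ' * tdl ℓ') + (∑ ℓ, KulHB ℓ * tul ℓ) + K * Tidle ≥
      a * θ * ((∑ ℓ', tdl ℓ') + Tidle + (∑ ℓ, tul ℓ)))

/-- A feasible point of the rigid problem with budget `K' = K − a·θ > 0` that
satisfies the uplink ordering constraint for `σ` yields feasibility of the
session-based problem `(P_σ)`. -/
theorem rigid_ordered_feasible_implies_session_feasible
    (S : ℕ) (hS : 1 ≤ S) (σ : Equiv.Perm (Fin S))
    (D B Pd Pmax κ K a θ : ℝ)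
    (γ E α τmin : Fin S → ℝ)
    (hD : 0 < D) (hB : 0 < B) (hPd : 0 < Pd) (hPmax : 0 < Pmax)
    (hκ : 0 < κ) (hK : 0 < K) (ha : 0 < a) (hθ : 0 < θ)
    (hK' : 0 < K - a * θ)
    (hγ : ∀ s, 0 < γ s) (hE : ∀ s, 0 < E s)
    (hα : ∀ s, 0 < α s) (hτmin : ∀ s, 0 < τmin s)
    (Kdl : ℝ) (Kul p τ : Fin S → ℝ)
    (hfeas : RigidFeasible S D B Pd Pmax κ (K - a * θ) γ E α τmin Kdl Kul p τ)
    (horder : ∀ j j' : Fin S, j < j' →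
      D / (Kdl * B * Real.log (1 + Pd * γ (σ j))) + τ (σ j) ≤
        D / (Kdl * B * Real.log (1 + Pd * γ (σ j'))) + τ (σ j')) :
    SessionFeasible S σ D B Pd Pmax κ K a θ γ E α τmin := by
  obtain ⟨hKdl0, hKdlK, hKul0, hp, hτlb, hKulsum, -, hEcon⟩ := hfeas
  have hτpos : ∀ s, 0 < τ s := fun s => lt_of_lt_of_le (hτmin s) (hτlb s)
  have hLdl : ∀ m, 0 < Real.log (1 + Pd * γ m) := fun m =>
    Real.log_pos (by have := hγ m; nlinarith)
  have hLul : ∀ s, 0 < Real.log (1 + p s * γ s / Kul s) := fun s =>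
    Real.log_pos (by
      have h1 : 0 < p s * γ s / Kul s := div_pos (mul_pos (hp s).1 (hγ s)) (hKul0 s)
      linarith)
  have hX : ∀ s, 0 < Kul s * B * Real.log (1 + p s * γ s / Kul s) :=
    fun s => mul_pos (mul_pos (hKul0 s) hB) (hLul s)
  set i0 : Fin S := ⟨0, hS⟩ with hi0def
  set Tdl : ℝ := ∑ m, D / (Kdl * B * Real.log (1 + Pd * γ m)) with hTdldef
  have htdlterm : ∀ m, 0 < D / (Kdl * B * Real.log (1 + Pd * γ m)) := fun m =>
    div_pos hD (mul_pos (mul_pos hKdl0 hB) (hLdl m))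
  have hTdlge : ∀ m, D / (Kdl * B * Real.log (1 + Pd * γ m)) ≤ Tdl := fun m =>
    Finset.single_le_sum (fun i _ => (htdlterm i).le) (Finset.mem_univ m)
  set Tid : ℝ := ∑ s, τ s with hTiddef
  have hTidge : ∀ s, τ s ≤ Tid := fun s =>
    Finset.single_le_sum (fun i _ => (hτpos i).le) (Finset.mem_univ s)
  have hTid0 : 0 ≤ Tid := Finset.sum_nonneg (fun i _ => (hτpos i).le)
  have hTdl0 : 0 ≤ Tdl := Finset.sum_nonneg (fun i _ => (htdlterm i).le)
  have haθ : 0 < a * θ := mul_pos ha hθ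
  have hi0le : ∀ m : Fin S, i0 ≤ m := fun m => by
    simp [hi0def, Fin.le_def]
  have htul : ∀ ℓ : Fin S,
      0 < D / (Kul (σ ℓ) * B * Real.log (1 + p (σ ℓ) * γ (σ ℓ) / Kul (σ ℓ))) :=
    fun ℓ => div_pos hD (hX (σ ℓ))
  refine ⟨(fun ℓ' => if ℓ' = i0 then Tdl else 0),
    (fun ℓ => D / (Kul (σ ℓ) * B * Real.log (1 + p (σ ℓ) * γ (σ ℓ) / Kul (σ ℓ)))),
    Tid,
    (fun _ => Kdl), (fun _ => a * θ), (fun _ => a * θ),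
    (fun u ℓ => if u = σ ℓ then Kul u else 0),
    (fun u ℓ => if u = σ ℓ then p u else 0),
    ?_, ?_, hTid0, fun _ => hKdl0.le, fun _ => haθ.le, fun _ => haθ.le,
    ?_, ?_, ?_, ?_, ?_, ?_, ?_, ?_⟩
  · intro ℓ'; dsimp only; split_ifs
    · exact hTdl0
    · exact le_refl 0
  · intro ℓ; exact (htul ℓ).le
  · -- box constraints for Kul, pul
    intro j ℓ _
    refine ⟨?_, ?_, ?_⟩ <;> dsimp only <;> split_ifs
    · exact (hKul0 _).le
    · exact le_refl 0
    · exact (hp _).1.le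
    · exact le_refl 0
    · exact (hp _).2
    · exact hPmax.le
  · -- (16)
    intro j
    dsimp only
    have h1 : (0:ℝ) ≤ ∑ ℓ ∈ Finset.Iio j,
        D / (Kul (σ ℓ) * B * Real.log (1 + p (σ ℓ) * γ (σ ℓ) / Kul (σ ℓ))) :=
      Finset.sum_nonneg (fun ℓ _ => (htul ℓ).le)
    have h2 : (0:ℝ) ≤ ∑ ℓ' ∈ Finset.Ioi (σ j), (if ℓ' = i0 then Tdl else 0) :=
      Finset.sum_nonneg (fun ℓ' _ => by split_ifs <;> [exact hTdl0; exact le_refl 0])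
    have := hTidge (σ j)
    have := hτlb (σ j)
    linarith
  · -- (18)
    intro m
    dsimp only
    have hsum : (∑ i ∈ Finset.Iic m,
        Kdl * B * Real.log (1 + Pd * γ m) * (if i = i0 then Tdl else 0))
        = Kdl * B * Real.log (1 + Pd * γ m) * Tdl := by
      rw [Finset.sum_eq_single i0]
      · rw [if_pos rfl]
      · intro b _ hb; rw [if_neg hb, mul_zero]
      · intro h; exact absurd (Finset.mem_Iic.mpr (hi0le m)) h
    rw [hsum]
    have hpos : 0 < Kdl * B * Real.log (1 + Pd * γ m) :=
      mul_pos (mul_pos hKdl0 hB) (hLdl m)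
    have hcan : Kdl * B * Real.log (1 + Pd * γ m) *
        (D / (Kdl * B * Real.log (1 + Pd * γ m))) = D := by
      have hL := (hLdl m).ne'
      field_simp
    calc Kdl * B * Real.log (1 + Pd * γ m) * Tdl
        ≥ Kdl * B * Real.log (1 + Pd * γ m) *
          (D / (Kdl * B * Real.log (1 + Pd * γ m))) :=
          mul_le_mul_of_nonneg_left (hTdlge m) hpos.le
      _ = D := hcan
  · -- (19)
    intro m; dsimp only; linarith [hKdlK]
  · -- (20)
    intro j
    dsimp only
    have hsum : (∑ ℓ ∈ Finset.Ici j,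
        ((if σ j = σ ℓ then Kul (σ j) else 0) * B *
          Real.log (1 + (if σ j = σ ℓ then p (σ j) else 0) * γ (σ j) /
            (if σ j = σ ℓ then Kul (σ j) else 0))) *
          (D / (Kul (σ ℓ) * B * Real.log (1 + p (σ ℓ) * γ (σ ℓ) / Kul (σ ℓ)))))
        = D := by
      rw [Finset.sum_eq_single j]
      · rw [if_pos rfl, if_pos rfl]
        have hXj := hX (σ j)
        rw [mul_comm]
        exact div_mul_cancel₀ D hXj.ne'
      · intro b _ hb
        have : σ j ≠ σ b := fun h => hb (σ.injective h).symm
        rw [if_neg this, zero_mul, zero_mul, zero_mul]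
      · intro h; exact absurd (Finset.mem_Ici.mpr le_rfl) h
    rw [hsum]
  · -- (21)
    intro ℓ
    dsimp only
    have hsum : (∑ j ∈ Finset.Iic ℓ, (if σ j = σ ℓ then Kul (σ j) else 0))
        = Kul (σ ℓ) := by
      rw [Finset.sum_eq_single ℓ]
      · rw [if_pos rfl]
      · intro b _ hb
        have : σ b ≠ σ ℓ := fun h => hb (σ.injective h)
        rw [if_neg this]
      · intro h; exact absurd (Finset.mem_Iic.mpr le_rfl) h
    rw [hsum]
    have hle : Kul (σ ℓ) ≤ ∑ s, Kul s :=
      Finset.single_le_sum (fun i _ => (hKul0 i).le) (Finset.mem_univ (σ ℓ))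
    linarith
  · -- (22)
    intro j
    dsimp only
    have hsum : (∑ ℓ ∈ Finset.Ici j, (if σ j = σ ℓ then p (σ j) else 0) *
        (D / (Kul (σ ℓ) * B * Real.log (1 + p (σ ℓ) * γ (σ ℓ) / Kul (σ ℓ)))))
        = p (σ j) *
          (D / (Kul (σ j) * B * Real.log (1 + p (σ j) * γ (σ j) / Kul (σ j)))) := by
      rw [Finset.sum_eq_single j]
      · rw [if_pos rfl]
      · intro b _ hb
        have : σ j ≠ σ b := fun h => hb (σ.injective h).symm
        rw [if_neg this, zero_mul]
      · intro h; exact absurd (Finset.mem_Ici.mpr le_rfl) h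
    rw [hsum]
    have h1 : (0:ℝ) ≤ ∑ ℓ ∈ Finset.Iio j,
        D / (Kul (σ ℓ) * B * Real.log (1 + p (σ ℓ) * γ (σ ℓ) / Kul (σ ℓ))) :=
      Finset.sum_nonneg (fun ℓ _ => (htul ℓ).le)
    have h2 : (0:ℝ) ≤ ∑ ℓ' ∈ Finset.Ioi (σ j), (if ℓ' = i0 then Tdl else 0) :=
      Finset.sum_nonneg (fun ℓ' _ => by split_ifs <;> [exact hTdl0; exact le_refl 0])
    have hτcp : τ (σ j) ≤ (∑ ℓ ∈ Finset.Iio j,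
        D / (Kul (σ ℓ) * B * Real.log (1 + p (σ ℓ) * γ (σ ℓ) / Kul (σ ℓ))))
        + (∑ ℓ' ∈ Finset.Ioi (σ j), (if ℓ' = i0 then Tdl else 0)) + Tid := by
      have := hTidge (σ j); linarith
    have hsq : (τ (σ j)) ^ 2 ≤ ((∑ ℓ ∈ Finset.Iio j,
        D / (Kul (σ ℓ) * B * Real.log (1 + p (σ ℓ) * γ (σ ℓ) / Kul (σ ℓ))))
        + (∑ ℓ' ∈ Finset.Ioi (σ j), (if ℓ' = i0 then Tdl else 0)) + Tid) ^ 2 :=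
      pow_le_pow_left₀ (hτpos (σ j)).le hτcp 2
    have hdiv : κ * (α (σ j)) ^ 3 / ((∑ ℓ ∈ Finset.Iio j,
        D / (Kul (σ ℓ) * B * Real.log (1 + p (σ ℓ) * γ (σ ℓ) / Kul (σ ℓ))))
        + (∑ ℓ' ∈ Finset.Ioi (σ j), (if ℓ' = i0 then Tdl else 0)) + Tid) ^ 2
        ≤ κ * (α (σ j)) ^ 3 / (τ (σ j)) ^ 2 :=
      div_le_div_of_nonneg_left (mul_pos hκ (pow_pos (hα (σ j)) 3)).le (pow_pos (hτpos (σ j)) 2) hsq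
    have hE' := hEcon (σ j)
    have hmd : p (σ j) * D /
        (Kul (σ j) * B * Real.log (1 + p (σ j) * γ (σ j) / Kul (σ j)))
        = p (σ j) * (D /
          (Kul (σ j) * B * Real.log (1 + p (σ j) * γ (σ j) / Kul (σ j)))) :=
      mul_div_assoc _ _ _
    rw [hmd] at hE'
    linarith
  · -- (24')
    dsimp only
    have h1 : (∑ ℓ' : Fin S, a * θ * (if ℓ' = i0 then Tdl else 0))
        = a * θ * (∑ ℓ' : Fin S, (if ℓ' = i0 then Tdl else 0)) :=
      (Finset.mul_sum _ _ _).symm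
    have h2 : (∑ ℓ : Fin S, a * θ *
        (D / (Kul (σ ℓ) * B * Real.log (1 + p (σ ℓ) * γ (σ ℓ) / Kul (σ ℓ)))))
        = a * θ * (∑ ℓ : Fin S,
          D / (Kul (σ ℓ) * B * Real.log (1 + p (σ ℓ) * γ (σ ℓ) / Kul (σ ℓ)))) :=
      (Finset.mul_sum _ _ _).symm
    rw [h1, h2]
    have hKT : a * θ * Tid ≤ K * Tid :=
      mul_le_mul_of_nonneg_right (by linarith) hTid0
    nlinarith [hTid0]
end
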